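/- Let B : ℝ^m ⇒ ℝ^m be a set-valued operator such that zer(B) ≠ ∅ and J_B(x) ≠ ∅ for every x ∈ ℝ^m, and suppose that, for some symmetric positive definite matrix Ψ ∈ ℝ^{m×m} and some μ̃ > 0, B is μ̃-restricted strongly monotone with respect to zer(B) in the Ψ-induced space. Then zer(B) consists of exactly one point z, and every sequence (ω^k)_{k∈ℕ} in ℝ^m satisfying ω^{k+1} ∈ J_B(ω^k) for all k converges to z with linear rate: ‖ω^k − z‖_Ψ ≤ (1/(1+μ̃))^k · ‖ω^0 − z‖_Ψ for all k ∈ ℕ. -/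

import Mathlib

open scoped InnerProductSpace
open scoped MatrixOrder

/-- Conversion of a plain vector into `EuclideanSpace ℝ (Fin m)`. -/
noncomputable def toE {m : ℕ} (v : Fin m → ℝ) : EuclideanSpace ℝ (Fin m) :=
  (WithLp.equiv 2 _).symm v

/-- The Ψ-weighted inner product `⟪x, y⟫_Ψ := ⟪Ψ x, y⟫`. -/
noncomputable def wip {m : ℕ} (Ψ : Matrix (Fin m) (Fin m) ℝ)
    (x y : EuclideanSpace ℝ (Fin m)) : ℝ :=
  ⟪toE (Ψ.mulVec x), y⟫_ℝ

/-- The Ψ-weighted norm `‖x‖_Ψ := √⟪Ψ x, x⟫`. -/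
noncomputable def wnorm {m : ℕ} (Ψ : Matrix (Fin m) (Fin m) ℝ)
    (x : EuclideanSpace ℝ (Fin m)) : ℝ :=
  Real.sqrt (wip Ψ x x)

open Matrix in
lemma wip_eq_dot {m : ℕ} (Ψ : Matrix (Fin m) (Fin m) ℝ) (x y : EuclideanSpace ℝ (Fin m)) :
    wip Ψ x y = Ψ.mulVec x ⬝ᵥ (y : Fin m → ℝ) := by
  simp [wip, toE, PiLp.inner_apply, dotProduct, RCLike.inner_apply,
    WithLp.equiv_symm_apply, mul_comm]

open Matrix in
lemma herm_shift {m : ℕ} (S : Matrix (Fin m) (Fin m) ℝ) (hS : S.IsHermitian) (u v : Fin m → ℝ) :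
    S.mulVec u ⬝ᵥ v = u ⬝ᵥ S.mulVec v := by
  have hT : Sᵀ = S := by
    have := hS.eq; rwa [Matrix.conjTranspose_eq_transpose_of_trivial] at this
  rw [dotProduct_mulVec]
  conv_rhs => rw [← hT, vecMul_transpose]

open Matrix in
lemma wip_eq_inner {m : ℕ} {Ψ : Matrix (Fin m) (Fin m) ℝ} (hΨpd : Ψ.PosDef)
    (x y : EuclideanSpace ℝ (Fin m)) :
    wip Ψ x y = ⟪toE ((CFC.sqrt Ψ).mulVec x), toE ((CFC.sqrt Ψ).mulVec y)⟫_ℝ := by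
  set S := CFC.sqrt Ψ with hSdef
  have hSS : S * S = Ψ := CFC.sqrt_mul_sqrt_self Ψ hΨpd.posSemidef.nonneg
  have h1 : (⟪toE (S.mulVec x), toE (S.mulVec y)⟫_ℝ : ℝ) = S.mulVec x ⬝ᵥ S.mulVec y := by
    simp [toE, PiLp.inner_apply, dotProduct, RCLike.inner_apply,
      WithLp.equiv_symm_apply, mul_comm]
  rw [wip_eq_dot, h1, herm_shift S (CFC.sqrt_nonneg Ψ).posSemidef.1, mulVec_mulVec, hSS,
    ← herm_shift Ψ hΨpd.1]

lemma wnorm_eq_norm {m : ℕ} {Ψ : Matrix (Fin m) (Fin m) ℝ} (hΨpd : Ψ.PosDef)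
    (x : EuclideanSpace ℝ (Fin m)) :
    wnorm Ψ x = ‖toE ((CFC.sqrt Ψ).mulVec x)‖ := by
  rw [wnorm, wip_eq_inner hΨpd, real_inner_self_eq_norm_sq, Real.sqrt_sq (norm_nonneg _)]

lemma wip_self_eq_sq {m : ℕ} {Ψ : Matrix (Fin m) (Fin m) ℝ} (hΨpd : Ψ.PosDef)
    (x : EuclideanSpace ℝ (Fin m)) : wip Ψ x x = wnorm Ψ x ^ 2 := by
  rw [wip_eq_inner hΨpd, wnorm_eq_norm hΨpd, real_inner_self_eq_norm_sq]

lemma wip_cs {m : ℕ} {Ψ : Matrix (Fin m) (Fin m) ℝ} (hΨpd : Ψ.PosDef)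
    (x y : EuclideanSpace ℝ (Fin m)) : wip Ψ x y ≤ wnorm Ψ x * wnorm Ψ y := by
  rw [wip_eq_inner hΨpd, wnorm_eq_norm hΨpd, wnorm_eq_norm hΨpd]
  exact real_inner_le_norm _ _

lemma wip_sub_right {m : ℕ} (Ψ : Matrix (Fin m) (Fin m) ℝ)
    (x y z : EuclideanSpace ℝ (Fin m)) : wip Ψ x (y - z) = wip Ψ x y - wip Ψ x z := by
  simp [wip, inner_sub_right]

open Matrix in
lemma wnorm_eq_zero {m : ℕ} {Ψ : Matrix (Fin m) (Fin m) ℝ} (hΨpd : Ψ.PosDef)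
    {x : EuclideanSpace ℝ (Fin m)} (h : wnorm Ψ x = 0) : x = 0 := by
  by_contra hx
  have hpos : 0 < x ⬝ᵥ Ψ.mulVec (x : Fin m → ℝ) := by
    have := hΨpd.dotProduct_mulVec_pos (x := (x : Fin m → ℝ)) (fun h' => hx (by ext i; exact congrFun h' i))
    simpa using this
  have h0 : wip Ψ x x = 0 := by
    have hle : wip Ψ x x ≤ 0 := Real.sqrt_eq_zero'.mp h
    have hnn : 0 ≤ wip Ψ x x := by rw [wip_self_eq_sq hΨpd]; positivity
    linarith
  rw [wip_eq_dot, herm_shift Ψ hΨpd.1] at h0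
  linarith

lemma key_step {m : ℕ} {Ψ : Matrix (Fin m) (Fin m) ℝ} (hΨpd : Ψ.PosDef) {μt : ℝ} (hμt : 0 < μt)
    (a b : EuclideanSpace ℝ (Fin m)) (h : wip Ψ a (b - a) ≥ μt * wnorm Ψ a ^ 2) :
    wnorm Ψ a ≤ (1 / (1 + μt)) * wnorm Ψ b := by
  have hna : 0 ≤ wnorm Ψ a := Real.sqrt_nonneg _
  have hnb : 0 ≤ wnorm Ψ b := Real.sqrt_nonneg _
  have h1 : (1 + μt) * wnorm Ψ a ^ 2 ≤ wip Ψ a b := by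
    rw [wip_sub_right] at h
    have := wip_self_eq_sq hΨpd a
    nlinarith
  have h2 : wip Ψ a b ≤ wnorm Ψ a * wnorm Ψ b := wip_cs hΨpd a b
  rcases eq_or_lt_of_le hna with h0 | h0
  · rw [← h0]; positivity
  · have h3 : (1 + μt) * wnorm Ψ a ≤ wnorm Ψ b := by
      have h4 : wnorm Ψ a * ((1 + μt) * wnorm Ψ a) ≤ wnorm Ψ a * wnorm Ψ b := by nlinarith
      exact le_of_mul_le_mul_left h4 h0
    rw [div_mul_eq_mul_div, le_div_iff₀ (by linarith)]
    linarith

/-- Theorem 1 of the paper. Let `B : ℝ^m ⇒ ℝ^m` be a set-valued operator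
with `zer(B) ≠ ∅` and `J_B(x) ≠ ∅` for every `x` (recall `y ∈ J_B(x) ↔ x - y ∈ B(y)`), and
suppose `B` is `μ̃`-restricted strongly monotone w.r.t. `zer(B)` in the `Ψ`-induced space,
for a symmetric positive definite `Ψ` and `μ̃ > 0`. Then `zer(B)` is a singleton `{z}` and
every proximal-point sequence `ω^{k+1} ∈ J_B(ω^k)` converges to `z` with linear rate
`‖ω^k − z‖_Ψ ≤ (1/(1+μ̃))^k ‖ω^0 − z‖_Ψ`. -/
theorem stmt0 {m : ℕ}
    (B : EuclideanSpace ℝ (Fin m) → Set (EuclideanSpace ℝ (Fin m)))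
    (Ψ : Matrix (Fin m) (Fin m) ℝ) (hΨsymm : Ψ.IsSymm) (hΨpd : Ψ.PosDef)
    (μt : ℝ) (hμt : 0 < μt)
    (hzer : ∃ z, (0 : EuclideanSpace ℝ (Fin m)) ∈ B z)
    (hdom : ∀ x, ∃ y, x - y ∈ B y)
    (hmon : ∀ x u z v, u ∈ B x → v ∈ B z →
      (0 : EuclideanSpace ℝ (Fin m)) ∈ B z →
      wip Ψ (x - z) (u - v) ≥ μt * (wnorm Ψ (x - z)) ^ 2) :
    ∃ z, (0 : EuclideanSpace ℝ (Fin m)) ∈ B z ∧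
      (∀ z', (0 : EuclideanSpace ℝ (Fin m)) ∈ B z' → z' = z) ∧
      ∀ ω : ℕ → EuclideanSpace ℝ (Fin m),
        (∀ k : ℕ, ω k - ω (k + 1) ∈ B (ω (k + 1))) →
        ∀ k : ℕ, wnorm Ψ (ω k - z) ≤ (1 / (1 + μt)) ^ k * wnorm Ψ (ω 0 - z) := by
  obtain ⟨z, hz⟩ := hzer
  refine ⟨z, hz, ?_, ?_⟩
  · intro z' hz'
    have h := hmon z' 0 z 0 hz' hz hz
    have h0 : wip Ψ (z' - z) (0 - 0) = 0 := by simp [wip]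
    rw [h0] at h
    have hn : wnorm Ψ (z' - z) = 0 := by
      have hna : 0 ≤ wnorm Ψ (z' - z) := Real.sqrt_nonneg _
      have hw2 : wnorm Ψ (z' - z) ^ 2 = 0 := by nlinarith [sq_nonneg (wnorm Ψ (z' - z))]
      exact pow_eq_zero_iff (two_ne_zero) |>.mp hw2
    have := wnorm_eq_zero hΨpd hn
    exact sub_eq_zero.mp this
  · intro ω hω k
    induction k with
    | zero => simp
    | succ k ih =>
      have h := hmon (ω (k + 1)) (ω k - ω (k + 1)) z 0 (hω k) hz hz
      have heq : (ω k - ω (k + 1)) - 0 = (ω k - z) - (ω (k + 1) - z) := by abel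
      rw [heq] at h
      have hs := key_step hΨpd hμt (ω (k + 1) - z) (ω k - z) h
      calc wnorm Ψ (ω (k + 1) - z) ≤ (1 / (1 + μt)) * wnorm Ψ (ω k - z) := hs
        _ ≤ (1 / (1 + μt)) * ((1 / (1 + μt)) ^ k * wnorm Ψ (ω 0 - z)) := by
            apply mul_le_mul_of_nonneg_left ih; positivity
        _ = (1 / (1 + μt)) ^ (k + 1) * wnorm Ψ (ω 0 - z) := by ring
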